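/- Let H be a group, let G = H ∗ ℤ be the free product of H with the infinite cyclic group, and let pr : G → ℤ be the homomorphism that is trivial on H and the identity on the ℤ-factor. For a positive integer n, let G_n = pr^{−1}(nℤ). Then G_n is a normal subgroup of G of index n, and G_n is isomorphic to the free product ℤ ∗ H ∗ H ∗ ⋯ ∗ H of ℤ with n copies of H. -/

import Mathlib

open Monoid SemidirectProduct Multiplicative

namespace Stmt14Aux

variable (A : Type) [Group A]

/-- `K A` is the free product of `ℤ`-indexed copies of `A`. -/
abbrev K := Monoid.CoprodI (fun _ : ℤ => A)

/-- shift homomorphism by `d`. -/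
def shiftHom (d : ℤ) : K A →* K A :=
  Monoid.CoprodI.lift (fun i => (Monoid.CoprodI.of (M := fun _ : ℤ => A) (i := i + d)))

@[simp] lemma shiftHom_of (d i : ℤ) (a : A) :
    shiftHom A d (Monoid.CoprodI.of (M := fun _ : ℤ => A) (i := i) a)
      = Monoid.CoprodI.of (M := fun _ : ℤ => A) (i := i + d) a :=
  Monoid.CoprodI.lift_of _ _

lemma Khom_ext {N : Type*} [Monoid N] {f g : K A →* N}
    (h : ∀ (i : ℤ) (a : A), f (Monoid.CoprodI.of (M := fun _ : ℤ => A) (i := i) a)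
      = g (Monoid.CoprodI.of (M := fun _ : ℤ => A) (i := i) a)) : f = g :=
  Monoid.CoprodI.ext_hom _ _ (fun i => MonoidHom.ext (fun a => h i a))

/-- shift action of `Multiplicative ℤ` on `K A`. -/
def shift : Multiplicative ℤ →* MulAut (K A) where
  toFun z := MonoidHom.toMulEquiv (shiftHom A z.toAdd) (shiftHom A (-z.toAdd))
    (Khom_ext A (by intro i a; simp [add_assoc]))
    (Khom_ext A (by intro i a; simp [add_assoc]))
  map_one' := by
    ext x
    exact DFunLike.congr_fun (Khom_ext A (N := K A)
      (f := shiftHom A (0:ℤ)) (g := MonoidHom.id _) (by intro i a; simp)) x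
  map_mul' z w := by
    ext x
    refine DFunLike.congr_fun (Khom_ext A (N := K A)
      (f := shiftHom A (z*w).toAdd)
      (g := (shiftHom A z.toAdd).comp (shiftHom A w.toAdd)) ?_) x
    intro i a
    simp only [MonoidHom.comp_apply, shiftHom_of, toAdd_mul]
    rw [← add_assoc, add_right_comm]

@[simp] lemma shift_of (z : Multiplicative ℤ) (i : ℤ) (a : A) :
    shift A z (Monoid.CoprodI.of (M := fun _ : ℤ => A) (i := i) a)
      = Monoid.CoprodI.of (M := fun _ : ℤ => A) (i := i + z.toAdd) a := by
  simp [shift]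

end Stmt14Aux

namespace Stmt14Aux

open Monoid SemidirectProduct Multiplicative

variable (A : Type) [Group A]

/-- The map `K A →* A ∗ ℤ`, sending `of i a` to `t^i a t^{-i}`. -/
def KtoG : K A →* Coprod A (Multiplicative ℤ) :=
  Monoid.CoprodI.lift (fun i =>
    ((MulAut.conj (Coprod.inr (ofAdd i) : Coprod A (Multiplicative ℤ))).toMonoidHom.comp
      Coprod.inl))

@[simp] lemma KtoG_of (i : ℤ) (a : A) :
    KtoG A (Monoid.CoprodI.of (M := fun _ : ℤ => A) (i := i) a)
      = Coprod.inr (ofAdd i) * Coprod.inl a * (Coprod.inr (ofAdd i))⁻¹ := by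
  simp [KtoG, MulAut.conj_apply]

lemma KtoG_compat (g : Multiplicative ℤ) :
    (KtoG A).comp (shift A g).toMonoidHom
      = (MulAut.conj ((Coprod.inr : Multiplicative ℤ →* Coprod A (Multiplicative ℤ)) g)).toMonoidHom.comp (KtoG A) := by
  apply Khom_ext
  intro i a
  simp only [MonoidHom.comp_apply, MulEquiv.coe_toMonoidHom, shift_of, KtoG_of,
    MulAut.conj_apply]
  rw [show ofAdd (i + g.toAdd) = g * ofAdd i by
    rw [ofAdd_add, ofAdd_toAdd, mul_comm]]
  simp [mul_assoc]

/-- Forward map `A ∗ ℤ →* K A ⋊ ℤ`. -/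
def fwd : Coprod A (Multiplicative ℤ) →* (K A) ⋊[shift A] Multiplicative ℤ :=
  Coprod.lift (SemidirectProduct.inl.comp (Monoid.CoprodI.of (M := fun _ : ℤ => A) (i := 0)))
    SemidirectProduct.inr

/-- Backward map. -/
def bwd : (K A) ⋊[shift A] Multiplicative ℤ →* Coprod A (Multiplicative ℤ) :=
  SemidirectProduct.lift (KtoG A) Coprod.inr (KtoG_compat A)

lemma bwd_fwd : (bwd A).comp (fwd A) = MonoidHom.id _ := by
  apply Monoid.Coprod.hom_ext
  · ext a
    simp [fwd, bwd]
  · ext z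
    simp [fwd, bwd]

lemma fwd_bwd : (fwd A).comp (bwd A) = MonoidHom.id _ := by
  apply SemidirectProduct.hom_ext
  · rw [MonoidHom.comp_assoc]
    apply Khom_ext
    intro i a
    simp only [MonoidHom.comp_apply, MonoidHom.id_comp, lift_comp_inl, bwd, lift_inl, KtoG_of]
    simp only [map_mul, map_inv, fwd, Coprod.lift_apply_inl, Coprod.lift_apply_inr, MonoidHom.comp_apply]
    rw [← map_inv, ← SemidirectProduct.inl_aut]
    simp
  · apply MonoidHom.ext
    intro z
    simp only [MonoidHom.comp_apply, MonoidHom.id_apply, bwd, SemidirectProduct.lift_inr,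
      fwd, Coprod.lift_apply_inr]

/-- `A ∗ ℤ ≃* K A ⋊ ℤ`. -/
def Phi : Coprod A (Multiplicative ℤ) ≃* (K A) ⋊[shift A] Multiplicative ℤ :=
  MonoidHom.toMulEquiv (fwd A) (bwd A) (bwd_fwd A) (fwd_bwd A)

end Stmt14Aux

namespace Stmt14Aux

open Monoid SemidirectProduct Multiplicative Subgroup

variable (A : Type) [Group A]

/-- multiplication by `n` on `Multiplicative ℤ`. -/
def mulN (n : ℕ) : Multiplicative ℤ →* Multiplicative ℤ where
  toFun z := ofAdd ((n : ℤ) * z.toAdd)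
  map_one' := by simp
  map_mul' x y := by simp [mul_add, ofAdd_add]

@[simp] lemma mulN_apply (n : ℕ) (z : Multiplicative ℤ) :
    mulN n z = ofAdd ((n : ℤ) * z.toAdd) := rfl

lemma mulN_injective {n : ℕ} (hn : 0 < n) : Function.Injective (mulN n) := by
  intro x y h
  have h' : (n : ℤ) * x.toAdd = (n : ℤ) * y.toAdd := by
    have := congrArg Multiplicative.toAdd h
    simpa using this
  have : x.toAdd = y.toAdd := by
    have hn' : (n : ℤ) ≠ 0 := by exact_mod_cast hn.ne'
    exact mul_left_cancel₀ hn' h'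
  exact Multiplicative.toAdd.injective this

/-- twisted action: shift composed with multiplication by `n`. -/
def psi (n : ℕ) : Multiplicative ℤ →* MulAut (K A) := (shift A).comp (mulN n)

/-- inclusion `K A ⋊[psi] ℤ →* K A ⋊[shift] ℤ`. -/
def theta (n : ℕ) : (K A) ⋊[psi A n] Multiplicative ℤ →* (K A) ⋊[shift A] Multiplicative ℤ :=
  SemidirectProduct.map (MonoidHom.id _) (mulN n) (fun g => rfl)

@[simp] lemma theta_left (n : ℕ) (x : (K A) ⋊[psi A n] Multiplicative ℤ) :
    (theta A n x).left = x.left := SemidirectProduct.map_left _ _ _ x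

@[simp] lemma theta_right (n : ℕ) (x : (K A) ⋊[psi A n] Multiplicative ℤ) :
    (theta A n x).right = mulN n x.right := SemidirectProduct.map_right _ _ _ x

/-- The subgroup `rightHom⁻¹(⟨tⁿ⟩)`. -/
def S (n : ℕ) : Subgroup ((K A) ⋊[shift A] Multiplicative ℤ) :=
  Subgroup.comap (rightHom : _ →* Multiplicative ℤ) (Subgroup.zpowers (ofAdd (n : ℤ)))

lemma ofAdd_zpow (x : ℤ) (k : ℤ) : (ofAdd x) ^ k = ofAdd (k * x) := by
  rw [← smul_eq_mul, ofAdd_zsmul]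

lemma theta_mem (n : ℕ) (x : (K A) ⋊[psi A n] Multiplicative ℤ) : theta A n x ∈ S A n := by
  have : rightHom (theta A n x) = mulN n x.right := by
    rw [rightHom_eq_right, theta_right]
  refine Subgroup.mem_comap.2 ?_
  rw [this, Subgroup.mem_zpowers_iff]
  exact ⟨x.right.toAdd, by rw [ofAdd_zpow, mul_comm]; rfl⟩

/-- `K A ⋊[psi] ℤ ≃* rightHom⁻¹(⟨tⁿ⟩)`. -/
noncomputable def thetaEquiv (n : ℕ) (hn : 0 < n) :
    ((K A) ⋊[psi A n] Multiplicative ℤ) ≃* S A n := by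
  refine MulEquiv.ofBijective ((theta A n).codRestrict (S A n) (theta_mem A n)) ⟨?_, ?_⟩
  · intro x y h
    have h' : theta A n x = theta A n y := congrArg Subtype.val h
    have hl : x.left = y.left := by
      have := congrArg (SemidirectProduct.left (φ := shift A)) h'
      simpa using this
    have hr0 : mulN n x.right = mulN n y.right := by
      have := congrArg (SemidirectProduct.right (φ := shift A)) h'
      simpa using this
    ext
    · exact hl
    · exact mulN_injective hn hr0
  · rintro ⟨x, hx⟩
    rw [S, Subgroup.mem_comap, Subgroup.mem_zpowers_iff] at hx
    obtain ⟨m, hm⟩ := hx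
    refine ⟨⟨x.left, ofAdd m⟩, ?_⟩
    apply Subtype.ext
    show theta A n _ = x
    ext
    · rfl
    · show mulN n (ofAdd m) = x.right
      rw [mulN_apply, toAdd_ofAdd, mul_comm, ← ofAdd_zpow]
      exact hm.trans (by rw [rightHom_eq_right])

end Stmt14Aux

namespace Stmt14Aux

open Monoid SemidirectProduct Multiplicative Subgroup

variable (H : Type) [Group H] (n : ℕ)

/-- `B n H` : free product of `n` copies of `H`. -/
abbrev B := Monoid.CoprodI (fun _ : Fin n => H)

/-- index `r` as element of `Fin n` from integer `emod`. -/
def finOf (hn : 0 < n) (j : ℤ) : Fin n :=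
  ⟨(j % (n:ℤ)).toNat, by
    have h0 : (0:ℤ) ≤ j % (n:ℤ) := Int.emod_nonneg j (by exact_mod_cast hn.ne')
    have h1 : j % (n:ℤ) < n := Int.emod_lt_of_pos j (by exact_mod_cast hn)
    omega⟩

/-- `K H →* K (B n H)` sending `of j a` to `of (j/n) (of (j%n) a)`. -/
def reFwd (hn : 0 < n) : K H →* K (B H n) :=
  Monoid.CoprodI.lift (fun j =>
    ((Monoid.CoprodI.of (M := fun _ : ℤ => B H n) (i := j / (n:ℤ))).comp
      (Monoid.CoprodI.of (M := fun _ : Fin n => H) (i := finOf n hn j))))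

@[simp] lemma reFwd_of (hn : 0 < n) (j : ℤ) (a : H) :
    reFwd H n hn (Monoid.CoprodI.of (M := fun _ : ℤ => H) (i := j) a)
      = Monoid.CoprodI.of (M := fun _ : ℤ => B H n) (i := j / (n:ℤ))
          (Monoid.CoprodI.of (M := fun _ : Fin n => H) (i := finOf n hn j) a) :=
  Monoid.CoprodI.lift_of _ _

/-- inverse reindexing map. -/
def reBwd : K (B H n) →* K H :=
  Monoid.CoprodI.lift (fun m =>
    Monoid.CoprodI.lift (fun r =>
      Monoid.CoprodI.of (M := fun _ : ℤ => H) (i := m * n + (r : ℤ))))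

@[simp] lemma reBwd_of (m : ℤ) (r : Fin n) (a : H) :
    reBwd H n (Monoid.CoprodI.of (M := fun _ : ℤ => B H n) (i := m)
        (Monoid.CoprodI.of (M := fun _ : Fin n => H) (i := r) a))
      = Monoid.CoprodI.of (M := fun _ : ℤ => H) (i := m * n + (r : ℤ)) a := by
  rw [reBwd, Monoid.CoprodI.lift_of, Monoid.CoprodI.lift_of]

lemma ediv_key (hn : 0 < n) (m : ℤ) (r : Fin n) : (m * (n:ℤ) + (r : ℤ)) / (n:ℤ) = m := by
  have h0 : (0:ℤ) ≤ (r:ℤ) := Int.ofNat_nonneg _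
  have h1 : ((r : ℤ)) < n := by exact_mod_cast r.isLt
  rw [add_comm, Int.add_mul_ediv_right _ _ (by exact_mod_cast hn.ne' : (n:ℤ) ≠ 0)]
  rw [Int.ediv_eq_zero_of_lt h0 h1, zero_add]

lemma emod_key (hn : 0 < n) (m : ℤ) (r : Fin n) : finOf n hn (m * n + (r : ℤ)) = r := by
  have h1 : ((r : ℤ)) < n := by exact_mod_cast r.isLt
  apply Fin.ext
  simp only [finOf]
  rw [add_comm, Int.add_mul_emod_self_right, Int.emod_eq_of_lt (Int.ofNat_nonneg _) h1]
  simp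

lemma reBwd_reFwd (hn : 0 < n) : (reBwd H n).comp (reFwd H n hn) = MonoidHom.id _ := by
  apply Khom_ext
  intro j a
  simp only [MonoidHom.comp_apply, MonoidHom.id_apply, reFwd_of, reBwd_of]
  have : j / (n:ℤ) * n + ((finOf n hn j : ℕ) : ℤ) = j := by
    have h0 : (0:ℤ) ≤ j % (n:ℤ) := Int.emod_nonneg j (by exact_mod_cast hn.ne')
    have : ((finOf n hn j : ℕ) : ℤ) = j % (n:ℤ) := by
      simp [finOf, Int.toNat_of_nonneg h0]
    rw [this]
    exact Int.ediv_mul_add_emod j (n:ℤ)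
  rw [this]

lemma reFwd_reBwd (hn : 0 < n) : (reFwd H n hn).comp (reBwd H n) = MonoidHom.id _ := by
  apply Monoid.CoprodI.ext_hom
  intro m
  apply Monoid.CoprodI.ext_hom
  intro r
  ext a
  simp only [MonoidHom.comp_apply, MonoidHom.id_apply, reBwd_of, reFwd_of]
  rw [ediv_key n hn, emod_key n hn]

/-- The reindexing equivalence. -/
def reEquiv (hn : 0 < n) : K H ≃* K (B H n) :=
  MonoidHom.toMulEquiv (reFwd H n hn) (reBwd H n) (reBwd_reFwd H n hn) (reFwd_reBwd H n hn)

lemma reEquiv_compat (hn : 0 < n) (g : Multiplicative ℤ) :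
    (reFwd H n hn).comp (psi H n g).toMonoidHom
      = (shift (B H n) g).toMonoidHom.comp (reFwd H n hn) := by
  apply Khom_ext
  intro j a
  have hpsig : (psi H n g) (Monoid.CoprodI.of (M := fun _ : ℤ => H) (i := j) a)
      = Monoid.CoprodI.of (M := fun _ : ℤ => H) (i := j + (n : ℤ) * g.toAdd) a := by
    show shift H (mulN n g) _ = _
    rw [shift_of, mulN_apply, toAdd_ofAdd]
  simp only [MonoidHom.comp_apply, MulEquiv.coe_toMonoidHom, hpsig, reFwd_of, shift_of]
  have hdiv : (j + (n : ℤ) * g.toAdd) / (n:ℤ) = j / (n:ℤ) + g.toAdd := by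
    rw [mul_comm, Int.add_mul_ediv_right _ _ (by exact_mod_cast hn.ne' : (n:ℤ) ≠ 0)]
  have hmod : finOf n hn (j + (n : ℤ) * g.toAdd) = finOf n hn j := by
    apply Fin.ext
    simp only [finOf]
    rw [Int.add_mul_emod_self_left]
    
  rw [hdiv, hmod]

/-- congruence of semidirect products along an equivariant iso of the normal part. -/
def sdCongr {N N' G : Type*} [Group N] [Group N'] [Group G] {φ : G →* MulAut N}
    {φ' : G →* MulAut N'} (e : N ≃* N')
    (h : ∀ g : G, (e.toMonoidHom).comp (φ g).toMonoidHom
      = (φ' g).toMonoidHom.comp e.toMonoidHom) :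
    N ⋊[φ] G ≃* N' ⋊[φ'] G where
  toFun x := ⟨e x.left, x.right⟩
  invFun x := ⟨e.symm x.left, x.right⟩
  left_inv x := by ext <;> simp
  right_inv x := by ext <;> simp
  map_mul' x y := by
    have := DFunLike.congr_fun (h x.right) y.left
    simp only [MonoidHom.comp_apply, MulEquiv.coe_toMonoidHom] at this
    ext <;> simp [mul_left, mul_right, this]

end Stmt14Aux

namespace Stmt14Aux

open Monoid SemidirectProduct Multiplicative Subgroup

variable (H : Type) [Group H] (n : ℕ)

/-- commutativity equivalence of coproducts. -/
def coprodComm (M N : Type*) [Monoid M] [Monoid N] : Coprod M N ≃* Coprod N M :=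
  MonoidHom.toMulEquiv (Coprod.swap M N) (Coprod.swap N M)
    (Coprod.swap_comp_swap N M) (Coprod.swap_comp_swap M N)

lemma pr_eq : (rightHom : (K H) ⋊[shift H] Multiplicative ℤ →* Multiplicative ℤ).comp (fwd H)
    = Coprod.lift 1 (MonoidHom.id (Multiplicative ℤ)) := by
  apply Monoid.Coprod.hom_ext
  · ext a
    simp [fwd]
  · rfl

lemma zpowers_index : (Subgroup.zpowers (ofAdd (n : ℤ))).index = n := by
  have h : Subgroup.zpowers (ofAdd (n : ℤ))
      = AddSubgroup.toSubgroup (AddSubgroup.zmultiples (n : ℤ)) := by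
    ext x
    rw [Subgroup.mem_zpowers_iff]
    constructor
    · rintro ⟨k, hk⟩
      show x.toAdd ∈ AddSubgroup.zmultiples (n : ℤ)
      exact ⟨k, by rw [← hk, ofAdd_zpow]; simp [smul_eq_mul, mul_comm]⟩
    · intro hx
      obtain ⟨k, hk⟩ := (by exact hx : x.toAdd ∈ AddSubgroup.zmultiples (n : ℤ))
      exact ⟨k, by rw [ofAdd_zpow]; simp only [smul_eq_mul] at hk; rw [hk]; simp⟩
  rw [h, AddSubgroup.index_toSubgroup, Int.index_zmultiples, Int.natAbs_natCast]

end Stmt14Aux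


namespace Stmt14Aux

open Monoid SemidirectProduct Multiplicative Subgroup

variable (H : Type) [Group H] (n : ℕ)

lemma reEquiv_compat' (hn : 0 < n) (g : Multiplicative ℤ) :
    ((reEquiv H n hn).toMonoidHom).comp (psi H n g).toMonoidHom
      = (shift (B H n) g).toMonoidHom.comp (reEquiv H n hn).toMonoidHom :=
  reEquiv_compat H n hn g

/-- the big isomorphism from `S H n`. -/
noncomputable def isoA (hn : 0 < n) : S H n ≃* Coprod (Multiplicative ℤ) (B H n) :=
  (((thetaEquiv H n hn).symm.trans
    (sdCongr (reEquiv H n hn) (reEquiv_compat' H n hn))).trans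
      (Phi (B H n)).symm).trans (coprodComm _ _)

end Stmt14Aux

open Stmt14Aux Monoid SemidirectProduct Multiplicative

/-- Let `H` be a group, `G = H ∗ ℤ` and `pr : G → ℤ` the homomorphism trivial on `H` and
the identity on the `ℤ`-factor.  For `n ≥ 1` let `G_n = pr⁻¹(nℤ)`.  Then `G_n` is a normal
subgroup of `G` of index `n` and `G_n ≅ ℤ ∗ H ∗ ⋯ ∗ H` (`n` copies of `H`). -/
theorem stmt14 (H : Type) [Group H] (n : ℕ) (hn : 0 < n)
    (pr : Monoid.Coprod H (Multiplicative ℤ) →* Multiplicative ℤ)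
    (hpr : pr = Monoid.Coprod.lift 1 (MonoidHom.id (Multiplicative ℤ)))
    (Gn : Subgroup (Monoid.Coprod H (Multiplicative ℤ)))
    (hGn : Gn = Subgroup.comap pr (Subgroup.zpowers (Multiplicative.ofAdd (n : ℤ)))) :
    Gn.Normal ∧ Gn.index = n ∧
      Nonempty (Gn ≃*
        Monoid.Coprod (Multiplicative ℤ) (Monoid.CoprodI (fun _ : Fin n => H))) := by
  have hsurj : Function.Surjective pr := fun z => ⟨Coprod.inr z, by simp [hpr]⟩
  refine ⟨?_, ?_, ?_⟩
  · rw [hGn]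
    exact Subgroup.Normal.comap (Subgroup.normal_of_comm _) _
  · rw [hGn, Subgroup.index_comap_of_surjective _ hsurj, zpowers_index]
  · have hcoe : ((Phi H : Coprod H (Multiplicative ℤ) ≃*
        (K H) ⋊[shift H] Multiplicative ℤ) :
        Coprod H (Multiplicative ℤ) →* (K H) ⋊[shift H] Multiplicative ℤ) = fwd H := rfl
    have hmapeq : Subgroup.map
        ((Phi H : Coprod H (Multiplicative ℤ) ≃* (K H) ⋊[shift H] Multiplicative ℤ) :
          Coprod H (Multiplicative ℤ) →* (K H) ⋊[shift H] Multiplicative ℤ) Gn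
        = S H n := by
      rw [hGn, hpr, ← pr_eq H, ← Subgroup.comap_comap, ← hcoe]
      exact Subgroup.map_comap_eq_self_of_surjective (Phi H).surjective _
    exact ⟨(((Phi H).subgroupMap Gn).trans (MulEquiv.subgroupCongr hmapeq)).trans
      (isoA H n hn)⟩
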